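/- Let n be a natural number, σ > 0 a real number, and γ the probability measure on the space of n×n real matrices Matrix (Fin n) (Fin n) ℝ given by the product measure whose coordinates are all the one-dimensional Gaussian measure with mean 0 and variance σ² (i.e. Measure.pi over rows of Measure.pi over columns of gaussianReal 0 σ²). Let D be an orthogonal n×n real matrix, i.e. D * Dᵀ = 1. Then the pushforward of γ under the map M ↦ D * M * Dᵀ equals γ. -/

import Mathlib

open Matrix MeasureTheory ProbabilityTheory

/-- The measurable space structure on matrices, inherited from the product
measurable structure on functions. -/
instance matrixMeasurableSpace {m n α : Type*} [MeasurableSpace α] :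
    MeasurableSpace (Matrix m n α) :=
  inferInstanceAs (MeasurableSpace (m → n → α))

section Aux

open Set Finset
open scoped ENNReal NNReal

lemma lintegral_pi_fin_prod : ∀ {n : ℕ} (μ : Measure ℝ) [SigmaFinite μ]
    (f : Fin n → ℝ → ℝ≥0∞) (_ : ∀ i, Measurable (f i)),
    ∫⁻ x, ∏ i, f i (x i) ∂(Measure.pi fun _ : Fin n => μ) = ∏ i, ∫⁻ y, f i y ∂μ
  | 0, μ, _, f, hf => by
      simp [Measure.pi_of_empty]
  | (n+1), μ, _, f, hf => by
      have hmp := measurePreserving_piFinSuccAbove (fun _ : Fin (n+1) => μ) 0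
      have hgm : Measurable fun p : ℝ × (Fin n → ℝ) =>
          f 0 p.1 * ∏ i, f i.succ (p.2 i) :=
        ((hf 0).comp measurable_fst).mul
          (Finset.measurable_prod _ fun i _ =>
            (hf i.succ).comp ((measurable_pi_apply i).comp measurable_snd))
      have key : ∫⁻ x, ∏ i, f i (x i) ∂(Measure.pi fun _ : Fin (n+1) => μ)
          = ∫⁻ p, f 0 p.1 * ∏ i, f i.succ (p.2 i)
              ∂(μ.prod (Measure.pi fun _ : Fin n => μ)) := by
        rw [← hmp.lintegral_comp hgm]
        refine lintegral_congr fun x => ?_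
        simp [MeasurableEquiv.piFinSuccAbove, Fin.prod_univ_succ, Fin.insertNthEquiv,
          Fin.succAbove_zero, Fin.tail]
      rw [key, lintegral_prod _ hgm.aemeasurable]
      have inner : ∀ a : ℝ, ∫⁻ y : Fin n → ℝ, f 0 a * ∏ i : Fin n, f i.succ (y i)
            ∂(Measure.pi fun _ : Fin n => μ)
          = f 0 a * ∏ i : Fin n, ∫⁻ y, f i.succ y ∂μ := fun a => by
        rw [lintegral_const_mul _ (Finset.measurable_prod _ fun i _ =>
            (hf i.succ).comp (measurable_pi_apply i)),
          lintegral_pi_fin_prod μ (fun i => f i.succ) (fun i => hf i.succ)]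

      simp_rw [inner]
      rw [lintegral_mul_const _ (hf 0), Fin.prod_univ_succ, mul_comm]

lemma pi_gaussian_eq_withDensity (n : ℕ) (v : ℝ≥0) (hv : v ≠ 0) :
    Measure.pi (fun _ : Fin n => gaussianReal 0 v)
      = (volume : Measure (Fin n → ℝ)).withDensity
          (fun x => ∏ i, gaussianPDF 0 v (x i)) := by
  refine Measure.pi_eq fun s hs => ?_
  rw [withDensity_apply _ (MeasurableSet.univ_pi hs),
    ← lintegral_indicator (MeasurableSet.univ_pi hs)]
  have hind : ∀ x : Fin n → ℝ,
      (Set.pi Set.univ s).indicator (fun x => ∏ i, gaussianPDF 0 v (x i)) x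
        = ∏ i, (s i).indicator (gaussianPDF 0 v) (x i) := by
    intro x
    by_cases hx : x ∈ Set.pi Set.univ s
    · rw [Set.indicator_of_mem hx]
      exact Finset.prod_congr rfl fun i _ =>
        (Set.indicator_of_mem (hx i (Set.mem_univ i)) _).symm
    · rw [Set.indicator_of_notMem hx]
      rw [Set.mem_univ_pi, not_forall] at hx
      obtain ⟨i, hi⟩ := hx
      exact (Finset.prod_eq_zero (Finset.mem_univ i)
        (Set.indicator_of_notMem hi _)).symm
  rw [lintegral_congr hind, MeasureTheory.volume_pi,
    lintegral_pi_fin_prod volume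
      (fun i => (s i).indicator (gaussianPDF 0 v))
      (fun i => (measurable_gaussianPDF 0 v).indicator (hs i))]
  refine Finset.prod_congr rfl fun i _ => ?_
  rw [lintegral_indicator (hs i), ← gaussianReal_apply 0 hv]

lemma map_withDensity_equiv {α β : Type*} [MeasurableSpace α] [MeasurableSpace β]
    (e : α ≃ᵐ β) (μ : Measure α) (f : α → ℝ≥0∞) (hf : Measurable f) :
    (μ.withDensity f).map e = (μ.map e).withDensity (fun y => f (e.symm y)) := by
  ext s hs
  rw [Measure.map_apply e.measurable hs, withDensity_apply _ (e.measurable hs),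
    withDensity_apply _ hs]
  have hfm : Measurable fun a => f (e.symm a) := hf.comp e.symm.measurable
  rw [setLIntegral_map hs hfm e.measurable]
  refine setLIntegral_congr_fun (e.measurable hs) (fun x _ => ?_)
  simp

lemma measurable_mulVec {n : ℕ} (A : Matrix (Fin n) (Fin n) ℝ) :
    Measurable fun x : Fin n → ℝ => A *ᵥ x := by
  refine measurable_pi_lambda _ fun i => ?_
  simp only [Matrix.mulVec, dotProduct]
  exact Finset.measurable_sum _ fun j _ => (measurable_pi_apply j).const_mul _

lemma sum_sq_mulVec {n : ℕ} (A : Matrix (Fin n) (Fin n) ℝ) (hA : Aᵀ * A = 1)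
    (x : Fin n → ℝ) : ∑ i, (A *ᵥ x) i ^ 2 = ∑ i, x i ^ 2 := by
  have h1 : (A *ᵥ x) ⬝ᵥ (A *ᵥ x) = x ⬝ᵥ x := by
    rw [Matrix.dotProduct_mulVec, ← Matrix.mulVec_transpose,
      Matrix.mulVec_mulVec, hA, Matrix.one_mulVec]
  simpa [dotProduct, pow_two] using h1

lemma core_gaussian_mulVec {n : ℕ} (v : ℝ≥0) (hv : v ≠ 0)
    (D : Matrix (Fin n) (Fin n) ℝ) (hD : D * Dᵀ = 1) :
    Measure.map (fun x : Fin n → ℝ => D *ᵥ x)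
      (Measure.pi fun _ : Fin n => gaussianReal 0 v)
      = Measure.pi fun _ : Fin n => gaussianReal 0 v := by
  have hD' : Dᵀ * D = 1 := mul_eq_one_comm.mp hD
  -- the measurable equivalence
  let e : (Fin n → ℝ) ≃ᵐ (Fin n → ℝ) :=
    { toFun := fun x => D *ᵥ x
      invFun := fun x => Dᵀ *ᵥ x
      left_inv := fun x => by
        simp [Matrix.mulVec_mulVec, hD', Matrix.one_mulVec]
      right_inv := fun x => by
        simp [Matrix.mulVec_mulVec, hD, Matrix.one_mulVec]
      measurable_toFun := measurable_mulVec D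
      measurable_invFun := measurable_mulVec Dᵀ }
  have hdet : |D.det| = 1 := by
    have h2 : D.det * D.det = 1 := by
      have := congrArg Matrix.det hD
      rwa [Matrix.det_mul, Matrix.det_transpose, Matrix.det_one] at this
    rcases mul_self_eq_one_iff.mp h2 with h | h <;> simp [h]
  have hmapvol : (volume : Measure (Fin n → ℝ)).map e = volume := by
    have hd0 : LinearMap.det (Matrix.toLin' D) ≠ 0 := by
      rw [LinearMap.det_toLin']
      intro h; rw [h] at hdet; simp at hdet
    have := Measure.map_linearMap_addHaar_eq_smul_addHaar
      (volume : Measure (Fin n → ℝ)) hd0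
    have hcoe : ⇑(Matrix.toLin' D) = ⇑e := by
      funext x; simp [Matrix.toLin'_apply, e]
    rw [hcoe] at this
    rw [this, LinearMap.det_toLin']
    rw [abs_inv, hdet]
    simp
  have hG : Measurable fun x : Fin n → ℝ => ∏ i, gaussianPDF 0 v (x i) :=
    Finset.measurable_prod _ fun i _ =>
      (measurable_gaussianPDF 0 v).comp (measurable_pi_apply i)
  have hGinv : ∀ y : Fin n → ℝ,
      (∏ i, gaussianPDF 0 v ((e.symm y) i)) = ∏ i, gaussianPDF 0 v (y i) := by
    intro y
    have hsum : ∑ i, (Dᵀ *ᵥ y) i ^ 2 = ∑ i, y i ^ 2 :=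
      sum_sq_mulVec Dᵀ (by rwa [Matrix.transpose_transpose]) y
    simp only [gaussianPDF, gaussianPDFReal]
    rw [← ENNReal.ofReal_prod_of_nonneg, ← ENNReal.ofReal_prod_of_nonneg]
    · congr 1
      rw [Finset.prod_mul_distrib, Finset.prod_mul_distrib, ← Real.exp_sum, ← Real.exp_sum]
      congr 2
      rw [← Finset.sum_div, ← Finset.sum_div]
      congr 1
      simp only [sub_zero]
      rw [Finset.sum_neg_distrib, Finset.sum_neg_distrib]
      exact congrArg Neg.neg hsum
    · intro i _
      positivity
    · intro i _
      positivity
  calc Measure.map (fun x : Fin n → ℝ => D *ᵥ x)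
        (Measure.pi fun _ : Fin n => gaussianReal 0 v)
      = Measure.map e ((volume : Measure (Fin n → ℝ)).withDensity
          (fun x => ∏ i, gaussianPDF 0 v (x i))) := by
        rw [pi_gaussian_eq_withDensity n v hv]; rfl
    _ = ((volume : Measure (Fin n → ℝ)).map e).withDensity
          (fun y => ∏ i, gaussianPDF 0 v ((e.symm y) i)) :=
        map_withDensity_equiv e _ _ hG
    _ = (volume : Measure (Fin n → ℝ)).withDensity
          (fun y => ∏ i, gaussianPDF 0 v (y i)) := by
        rw [hmapvol]
        exact congrArg _ (funext hGinv)
    _ = Measure.pi fun _ : Fin n => gaussianReal 0 v :=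
        (pi_gaussian_eq_withDensity n v hv).symm

lemma map_transpose_pi_pi (n : ℕ) (μ0 : Measure ℝ) [IsProbabilityMeasure μ0] :
    Measure.map (fun M : Fin n → Fin n → ℝ => fun i j => M j i)
      (Measure.pi fun _ : Fin n => Measure.pi fun _ : Fin n => μ0)
    = Measure.pi fun _ : Fin n => Measure.pi fun _ : Fin n => μ0 := by
  have hτ : Measurable (fun M : Fin n → Fin n → ℝ => fun i j => M j i) :=
    measurable_pi_lambda _ fun i => measurable_pi_lambda _ fun j =>
      (measurable_pi_apply i).comp (measurable_pi_apply j)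
  refine (Measure.pi_eq_generateFrom
    (C := fun _ : Fin n => Set.pi Set.univ ''
      Set.pi Set.univ fun _ : Fin n => {t : Set ℝ | MeasurableSet t})
    (fun _ => generateFrom_pi) (fun _ => isPiSystem_pi)
    (fun _ => Measure.FiniteSpanningSetsIn.pi fun _ => μ0.toFiniteSpanningSetsIn)
    ?_).symm
  intro S hS
  have h' : ∀ i : Fin n, ∃ t : Fin n → Set ℝ,
      (∀ j, MeasurableSet (t j)) ∧ Set.pi Set.univ t = S i := by
    intro i
    obtain ⟨t, ht, hteq⟩ := hS i
    exact ⟨t, fun j => ht j (Set.mem_univ j), hteq⟩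
  choose t ht hSeq using h'
  have hbox : MeasurableSet (Set.pi Set.univ S) := by
    refine MeasurableSet.univ_pi fun i => ?_
    rw [← hSeq i]
    exact MeasurableSet.univ_pi (ht i)
  have hpre : (fun M : Fin n → Fin n → ℝ => fun i j => M j i) ⁻¹' Set.pi Set.univ S
      = Set.pi Set.univ fun j => Set.pi Set.univ fun i => t i j := by
    ext M
    simp only [Set.mem_preimage, Set.mem_univ_pi]
    constructor
    · intro h j i
      have := h i
      rw [← hSeq i, Set.mem_univ_pi] at this
      exact this j
    · intro h i
      rw [← hSeq i, Set.mem_univ_pi]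
      exact fun j => h j i
  rw [Measure.map_apply hτ hbox, hpre, Measure.pi_pi]
  calc ∏ j, (Measure.pi fun _ : Fin n => μ0) (Set.pi Set.univ fun i => t i j)
      = ∏ j, ∏ i, μ0 (t i j) :=
        Finset.prod_congr rfl fun j _ => Measure.pi_pi _ _
    _ = ∏ i, ∏ j, μ0 (t i j) := Finset.prod_comm
    _ = ∏ i, (Measure.pi fun _ : Fin n => μ0) (S i) := by
        refine Finset.prod_congr rfl fun i _ => ?_
        rw [← hSeq i, Measure.pi_pi]

/-- The i.i.d. centered Gaussian matrix measure (entries `gaussianReal 0 σ²`) is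
invariant under conjugation `M ↦ D * M * Dᵀ` by an orthogonal matrix `D`. -/
theorem gaussian_matrix_measure_orthogonal_conj_invariant
    (n : ℕ) (σ : ℝ) (hσ : 0 < σ)
    (γ : Measure (Matrix (Fin n) (Fin n) ℝ))
    (hγ : γ = Measure.pi fun _ : Fin n =>
      Measure.pi fun _ : Fin n => gaussianReal 0 ⟨σ ^ 2, sq_nonneg σ⟩)
    (D : Matrix (Fin n) (Fin n) ℝ) (hD : D * Dᵀ = 1) :
    Measure.map (fun M : Matrix (Fin n) (Fin n) ℝ => D * M * Dᵀ) γ = γ := by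
  subst hγ
  set v : ℝ≥0 := ⟨σ ^ 2, sq_nonneg σ⟩ with hvdef
  have hv : v ≠ 0 := by
    intro h
    have : σ ^ 2 = 0 := congrArg Subtype.val h
    nlinarith
  set γ : Measure (Fin n → Fin n → ℝ) :=
    Measure.pi fun _ : Fin n => Measure.pi fun _ : Fin n => gaussianReal 0 v with hγdef
  let τ : (Fin n → Fin n → ℝ) → Fin n → Fin n → ℝ := fun M => fun i j => M j i
  let R : (Fin n → Fin n → ℝ) → Fin n → Fin n → ℝ := fun M => fun i => D *ᵥ M i
  have hτ : Measurable τ :=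
    measurable_pi_lambda _ fun i => measurable_pi_lambda _ fun j =>
      (measurable_pi_apply i).comp (measurable_pi_apply j)
  have hRmp : MeasurePreserving R γ γ :=
    measurePreserving_pi _ _ fun _ =>
      ⟨measurable_mulVec D, core_gaussian_mulVec v hv D hD⟩
  have hR : Measurable R := hRmp.measurable
  have hcomp : (fun M : Matrix (Fin n) (Fin n) ℝ => D * M * Dᵀ)
      = R ∘ τ ∘ R ∘ τ := by
    funext M
    show D * M * Dᵀ = R (τ (R (τ M)))
    have hRr : ∀ N : Matrix (Fin n) (Fin n) ℝ, R N = N * Dᵀ := by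
      intro N
      ext i j
      simp [R, Matrix.mul_apply, Matrix.mulVec, dotProduct,
        Matrix.transpose_apply, mul_comm]
    have hτr : ∀ N : Matrix (Fin n) (Fin n) ℝ, τ N = Nᵀ := fun N => rfl
    rw [hτr, hRr, hτr, hRr, Matrix.transpose_mul, Matrix.transpose_transpose,
      Matrix.transpose_transpose, Matrix.mul_assoc]
  have hmapτ : Measure.map τ γ = γ := map_transpose_pi_pi n (gaussianReal 0 v)
  rw [show (fun M : Matrix (Fin n) (Fin n) ℝ => D * M * Dᵀ)
      = R ∘ τ ∘ R ∘ τ from hcomp]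
  show Measure.map (α := Fin n → Fin n → ℝ) (β := Fin n → Fin n → ℝ) (R ∘ τ ∘ R ∘ τ) γ = γ
  rw [← Measure.map_map hR (hτ.comp (hR.comp hτ)),
    ← Measure.map_map hτ (hR.comp hτ), ← Measure.map_map hR hτ,
    hmapτ, hRmp.map_eq, hmapτ, hRmp.map_eq]

end Aux
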